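/- Let 0 < λ ≤ 1 be real, let B be the backward shift on ℓ²(ℕ, ℂ) given by (Bf)(n) = f(n+1), and let E_λ be a bounded linear operator on ℓ²(ℕ, ℂ) satisfying (E_λ f)(n) = Σ_{k=0}^{n} C(n,k) λ^k (1−λ)^{n−k} f(k) for all f ∈ ℓ² and all n ∈ ℕ. Then E_λ ≠ 0 and (I − B)∘E_λ = λ·(E_λ∘(I − B)); that is, λ is an extended eigenvalue of I − B and the Euler operator E_λ is a corresponding extended eigenoperator. -/

import Mathlib

lemma key11 (l : ℂ) (g : ℕ → ℂ) (n : ℕ) :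
    (∑ k ∈ Finset.range (n+1), (n.choose k : ℂ) * l^k * (1-l)^(n-k) * g k)
      - ∑ k ∈ Finset.range (n+2), ((n+1).choose k : ℂ) * l^k * (1-l)^(n+1-k) * g k
    = l * ∑ k ∈ Finset.range (n+1), (n.choose k : ℂ) * l^k * (1-l)^(n-k) * (g k - g (k+1)) := by
  have h1 : (∑ k ∈ Finset.range (n+1), (n.choose k : ℂ) * l^k * (1-l)^(n-k) * g k)
      = ∑ k ∈ Finset.range (n+2), (n.choose k : ℂ) * l^k * (1-l)^(n-k) * g k := by
    rw [Finset.sum_range_succ (n := n+1)]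
    simp [Nat.choose_succ_self]
  set D : ℕ → ℂ := fun k => match k with
    | 0 => 0
    | (j+1) => l * ((n.choose j : ℂ) * l^j * (1-l)^(n-j)) * g (j+1) with hD
  have h2 : (∑ k ∈ Finset.range (n+1), l * ((n.choose k : ℂ) * l^k * (1-l)^(n-k)) * g (k+1))
      = ∑ k ∈ Finset.range (n+2), D k := by
    rw [Finset.sum_range_succ' (f := D) (n := n+1)]
    simp [hD]
  have h3 : l * (∑ k ∈ Finset.range (n+1), (n.choose k : ℂ) * l^k * (1-l)^(n-k) * (g k - g (k+1)))
      = (∑ k ∈ Finset.range (n+2), l * ((n.choose k : ℂ) * l^k * (1-l)^(n-k)) * g k)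
        - ∑ k ∈ Finset.range (n+2), D k := by
    rw [← h2, Finset.sum_range_succ (n := n+1) (f := fun k => l * ((n.choose k:ℂ) * l^k * (1-l)^(n-k)) * g k)]
    simp only [Nat.choose_succ_self, Nat.cast_zero, zero_mul, mul_zero, add_zero]
    rw [Finset.mul_sum, ← Finset.sum_sub_distrib]
    apply Finset.sum_congr rfl
    intro k _
    ring
  rw [h1, h3, ← Finset.sum_sub_distrib, ← Finset.sum_sub_distrib]
  apply Finset.sum_congr rfl
  intro k hk
  rw [Finset.mem_range] at hk
  match k with
  | 0 => simp [hD]; ring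
  | (j+1) =>
    simp only [hD]
    rcases Nat.lt_or_ge j n with hj | hj
    · have e1 : n + 1 - (j+1) = n - j := by omega
      have e2 : n - j = (n - (j+1)) + 1 := by omega
      rw [e1, e2, Nat.choose_succ_succ, pow_succ]
      push_cast
      ring
    · have hjn : j = n := by omega
      subst hjn
      simp only [Nat.choose_succ_self, Nat.cast_zero, zero_mul, mul_zero, Nat.choose_self,
        Nat.cast_one, Nat.sub_self, pow_zero, one_mul, mul_one, zero_sub]
      ring

theorem stmt11 (l : ℝ) (hl0 : 0 < l) (hl1 : l ≤ 1)
    (B : lp (fun _ : ℕ => ℂ) 2 →L[ℂ] lp (fun _ : ℕ => ℂ) 2)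
    (hB : ∀ f (n : ℕ), B f n = f (n+1))
    (E : lp (fun _ : ℕ => ℂ) 2 →L[ℂ] lp (fun _ : ℕ => ℂ) 2)
    (hE : ∀ f (n : ℕ), E f n = ∑ k ∈ Finset.range (n+1),
      (n.choose k : ℂ) * (l:ℂ)^k * (1 - (l:ℂ))^(n-k) * f k) :
    E ≠ 0 ∧ (1 - B).comp E = (l : ℂ) • (E.comp (1 - B)) := by
  constructor
  · intro h0
    have hf := hE (lp.single 2 0 (1:ℂ)) 0
    rw [h0] at hf
    simp [lp.single_apply_self] at hf
  · ext f n
    have hsub : ∀ (x : lp (fun _ : ℕ => ℂ) 2) (m : ℕ), ((1 - B) x) m = x m - B x m := by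
      intro x m
      have : (1 - B) x = x - B x := by simp [ContinuousLinearMap.sub_apply]
      rw [this, lp.coeFn_sub]
      rfl
    simp only [ContinuousLinearMap.comp_apply, ContinuousLinearMap.smul_apply]
    rw [hsub, hB, hE, hE, lp.coeFn_smul, Pi.smul_apply, smul_eq_mul, hE]
    have := key11 (l:ℂ) (fun k => f k) n
    simp only at this
    rw [this]
    congr 1
    apply Finset.sum_congr rfl
    intro k _
    rw [hsub, hB]
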